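/- Let P ⊆ ℤ² be a finite connected configuration in the triangular grid in which every particle has either zero or two occupied lower neighbours. Then no two distinct particles can both be leaders, where a leader is a particle with no occupied neighbour in directions 0, 1, 2 and 5. -/

import Mathlib

/-- The six direction vectors of the triangular grid. -/
def dirs : Finset (ℤ × ℤ) := {(1,0), (-1,0), (0,1), (0,-1), (1,-1), (-1,1)}

/-- The infinite triangular grid on `ℤ²`. -/
def triGrid : SimpleGraph (ℤ × ℤ) :=
  SimpleGraph.fromRel (fun v w => (w.1 - v.1, w.2 - v.2) ∈ dirs)

/-- The two lower neighbours of a vertex in axial coordinates. -/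
def lowNbr1 (p : ℤ × ℤ) : ℤ × ℤ := (p.1, p.2 - 1)
def lowNbr2 (p : ℤ × ℤ) : ℤ × ℤ := (p.1 + 1, p.2 - 1)

/-- Every particle has either zero or two occupied lower neighbours. -/
def ZeroOrTwoLower (P : Set (ℤ × ℤ)) : Prop :=
  ∀ p ∈ P, (lowNbr1 p ∈ P ∧ lowNbr2 p ∈ P) ∨ (lowNbr1 p ∉ P ∧ lowNbr2 p ∉ P)

/-- A leader: a particle with no occupied neighbour in directions 0, 1, 2 and 5
(direction 0 = `(1,0)`, direction 1 = `(1,-1)`, direction 2 = `(0,-1)`, and direction 5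
is the upper neighbour `(0,1)` whose other lower neighbour is the direction-0 node). -/
def IsLeader (P : Set (ℤ × ℤ)) (p : ℤ × ℤ) : Prop :=
  p ∈ P ∧ (p.1 + 1, p.2) ∉ P ∧ (p.1 + 1, p.2 - 1) ∉ P ∧
    (p.1, p.2 - 1) ∉ P ∧ (p.1, p.2 + 1) ∉ P

lemma neg_mem_dirs {a b : ℤ} (h : (a,b) ∈ dirs) : (-a,-b) ∈ dirs := by
  simp only [dirs, Finset.mem_insert, Finset.mem_singleton, Prod.ext_iff] at h ⊢
  omega

lemma triGrid_adj {v w : ℤ×ℤ} : triGrid.Adj v w ↔ v ≠ w ∧ (w.1-v.1, w.2-v.2) ∈ dirs := by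
  unfold triGrid
  rw [SimpleGraph.fromRel_adj]
  constructor
  · rintro ⟨h1, h2|h2⟩
    · exact ⟨h1, h2⟩
    · refine ⟨h1, ?_⟩
      have := neg_mem_dirs h2
      simpa using this
  · rintro ⟨h1,h2⟩; exact ⟨h1, Or.inl h2⟩

lemma adj_of_mem {v w : ℤ×ℤ} (h2 : (w.1-v.1, w.2-v.2) ∈ dirs) : triGrid.Adj v w := by
  refine triGrid_adj.mpr ⟨?_, h2⟩
  rintro rfl
  simp only [dirs, sub_self, Finset.mem_insert, Finset.mem_singleton, Prod.ext_iff] at h2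
  omega

lemma adj_cases {v w : ℤ×ℤ} (h : triGrid.Adj v w) :
    w = (v.1+1,v.2) ∨ w = (v.1-1,v.2) ∨ w = (v.1,v.2+1) ∨ w = (v.1,v.2-1) ∨
    w = (v.1+1,v.2-1) ∨ w = (v.1-1,v.2+1) := by
  have h2 := (triGrid_adj.mp h).2
  simp only [dirs, Finset.mem_insert, Finset.mem_singleton, Prod.ext_iff] at h2 ⊢
  omega

lemma connected_del {V : Type} (G : SimpleGraph V) (S : Set V) (r : V)
    (hconn : (G.induce S).Connected)
    (hne : (S \ {r}).Nonempty)
    (H : ∀ (a b : V) (ha : a ∈ S \ {r}) (hb : b ∈ S \ {r}), G.Adj r a → G.Adj r b →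
      (G.induce (S \ {r})).Reachable ⟨a, ha⟩ ⟨b, hb⟩) :
    (G.induce (S \ {r})).Connected := by
  have main : ∀ (n : ℕ) (u v : ↥S) (w : (G.induce S).Walk u v), w.length ≤ n →
      ∀ (hu : u.1 ∈ S \ {r}) (hv : v.1 ∈ S \ {r}),
      (G.induce (S \ {r})).Reachable ⟨u.1, hu⟩ ⟨v.1, hv⟩ := by
    intro n
    induction n with
    | zero =>
      intro u v w hlen hu hv
      cases w with
      | nil => exact SimpleGraph.Reachable.refl _
      | cons h w' => simp [SimpleGraph.Walk.length_cons] at hlen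
    | succ n ih =>
      intro u v w hlen hu hv
      cases w with
      | nil => exact SimpleGraph.Reachable.refl _
      | @cons _ x _ h w' =>
        have hGux : G.Adj u.1 x.1 := by simpa using h
        by_cases hx : (x : V) = r
        · cases w' with
          | nil =>
            exfalso
            exact hv.2 (by simpa using hx)
          | @cons _ x2 _ h2 w'' =>
            have hGx2 : G.Adj x.1 x2.1 := by simpa using h2
            have hadj1 : G.Adj r u.1 := by rw [← hx]; exact hGux.symm
            have hx2ne : x2.1 ≠ r := by
              intro e
              rw [hx, e] at hGx2
              exact G.irrefl hGx2
            have hx2m : x2.1 ∈ S \ {r} := ⟨x2.2, by simpa using hx2ne⟩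
            have hadj2 : G.Adj r x2.1 := by rw [← hx]; exact hGx2
            refine (H u.1 x2.1 hu hx2m hadj1 hadj2).trans (ih x2 v w'' ?_ hx2m hv)
            simp only [SimpleGraph.Walk.length_cons] at hlen
            omega
        · have hxm : x.1 ∈ S \ {r} := ⟨x.2, by simpa using hx⟩
          have step : (G.induce (S \ {r})).Adj ⟨u.1,hu⟩ ⟨x.1,hxm⟩ := by
            simpa using hGux
          refine step.reachable.trans (ih x v w' ?_ hxm hv)
          simp only [SimpleGraph.Walk.length_cons] at hlen
          omega
  rw [SimpleGraph.connected_iff]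
  constructor
  · rintro ⟨u, hu⟩ ⟨v, hv⟩
    obtain ⟨w⟩ := hconn.preconnected ⟨u, hu.1⟩ ⟨v, hv.1⟩
    exact main w.length _ _ w le_rfl hu hv
  · exact hne.to_subtype

lemma isolated_eq {V : Type} (G : SimpleGraph V) (S : Set V)
    (hconn : (G.induce S).Connected) {z w : V} (hz : z ∈ S) (hw : w ∈ S)
    (hiso : ∀ u ∈ S, ¬ G.Adj z u) : w = z := by
  obtain ⟨wk⟩ := hconn.preconnected ⟨z, hz⟩ ⟨w, hw⟩
  suffices h : ∀ (a b : ↥S), (G.induce S).Walk a b → a.1 = z → b.1 = a.1 by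
    simpa using h _ _ wk rfl
  intro a b wk2
  induction wk2 with
  | nil => intro _; rfl
  | @cons a x b h wk' ih =>
    intro ha
    exfalso
    exact hiso x.1 x.2 (by rw [← ha]; simpa using h)

lemma key (n : ℕ) : ∀ (P : Set (ℤ×ℤ)) (hfin : P.Finite), hfin.toFinset.card ≤ n →
    ZeroOrTwoLower P → (triGrid.induce P).Connected →
    ∀ p q : ℤ×ℤ, IsLeader P p → IsLeader P q → p = q := by
  induction n with
  | zero =>
    intro P hfin hcard hzt hconn p q hp hq
    exfalso
    have hpT : p ∈ hfin.toFinset := hfin.mem_toFinset.mpr hp.1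
    have := Finset.card_pos.mpr ⟨p, hpT⟩
    omega
  | succ n ih =>
    intro P hfin hcard hzt hconn p q hp hq
    set T := hfin.toFinset with hT
    have hpT : p ∈ T := hfin.mem_toFinset.mpr hp.1
    have hTne : (T.image Prod.snd).Nonempty := ⟨p.2, Finset.mem_image_of_mem _ hpT⟩
    set y0 := (T.image Prod.snd).max' hTne with hy0
    have htop : ∀ v ∈ P, v.2 ≤ y0 := fun v hv =>
      Finset.le_max' _ _ (Finset.mem_image_of_mem _ (hfin.mem_toFinset.mpr hv))
    obtain ⟨v0, hv0T, hv0y⟩ := Finset.mem_image.mp ((T.image Prod.snd).max'_mem hTne)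
    set row := (T.filter (fun v => v.2 = y0)).image Prod.fst with hrow
    have hrowne : row.Nonempty :=
      ⟨v0.1, Finset.mem_image_of_mem _ (Finset.mem_filter.mpr ⟨hv0T, hv0y⟩)⟩
    set x0 := row.min' hrowne with hx0
    have hleft : ∀ v ∈ P, v.2 = y0 → x0 ≤ v.1 := fun v hv hvy =>
      Finset.min'_le _ _ (Finset.mem_image_of_mem _
        (Finset.mem_filter.mpr ⟨hfin.mem_toFinset.mpr hv, hvy⟩))
    have hrP : ((x0,y0) : ℤ×ℤ) ∈ P := by
      obtain ⟨v, hvf, hvx⟩ := Finset.mem_image.mp (row.min'_mem hrowne)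
      obtain ⟨hvT, hvy⟩ := Finset.mem_filter.mp hvf
      have : v = (x0, y0) := by
        rw [Prod.ext_iff]; exact ⟨hvx, hvy⟩
      rw [← this]
      exact hfin.mem_toFinset.mp hvT
    have hW : ((x0-1, y0) : ℤ×ℤ) ∉ P := by
      intro h
      have := hleft _ h rfl
      omega
    have hN : ((x0, y0+1) : ℤ×ℤ) ∉ P := by
      intro h
      have := htop _ h
      omega
    have hNW : ((x0-1, y0+1) : ℤ×ℤ) ∉ P := by
      intro h
      have := htop _ h
      omega
    by_cases hpr : p = ((x0,y0) : ℤ×ℤ)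
    · -- p coincides with the top-left particle; show p is isolated, hence q = p
      refine (isolated_eq triGrid P hconn hp.1 hq.1 ?_).symm
      intro u hu hadj
      rcases adj_cases hadj with rfl|rfl|rfl|rfl|rfl|rfl
      · exact hp.2.1 hu
      · rw [hpr] at hu; exact hW hu
      · exact hp.2.2.2.2 hu
      · exact hp.2.2.2.1 hu
      · exact hp.2.2.1 hu
      · rw [hpr] at hu; exact hNW hu
    by_cases hqr : q = ((x0,y0) : ℤ×ℤ)
    · refine isolated_eq triGrid P hconn hq.1 hp.1 ?_
      intro u hu hadj
      rcases adj_cases hadj with rfl|rfl|rfl|rfl|rfl|rfl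
      · exact hq.2.1 hu
      · rw [hqr] at hu; exact hW hu
      · exact hq.2.2.2.2 hu
      · exact hq.2.2.2.1 hu
      · exact hq.2.2.1 hu
      · rw [hqr] at hu; exact hNW hu
    -- remove r = (x0,y0)
    set r : ℤ×ℤ := (x0,y0) with hr
    set P' : Set (ℤ×ℤ) := P \ {r} with hP'
    have hfin' : P'.Finite := hfin.diff
    have hcard' : hfin'.toFinset.card ≤ n := by
      have hsub : hfin'.toFinset ⊆ T := by
        intro z hz
        exact hfin.mem_toFinset.mpr (hfin'.mem_toFinset.mp hz).1
      have hrnot : r ∉ hfin'.toFinset := by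
        simp [hfin'.mem_toFinset, hP']
      have hrT : r ∈ T := hfin.mem_toFinset.mpr hrP
      have := Finset.card_lt_card ((Finset.ssubset_iff_of_subset hsub).mpr ⟨r, hrT, hrnot⟩)
      omega
    have hzt' : ZeroOrTwoLower P' := by
      intro u hu
      have h1 : lowNbr1 u ≠ r := by
        intro e
        apply hN
        have e1 : u.1 = x0 := congrArg Prod.fst e
        have e2 : u.2 - 1 = y0 := congrArg Prod.snd e
        have : u = ((x0, y0+1) : ℤ×ℤ) := by rw [Prod.ext_iff]; omega
        rw [← this]; exact hu.1
      have h2 : lowNbr2 u ≠ r := by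
        intro e
        apply hNW
        have e1 : u.1 + 1 = x0 := congrArg Prod.fst e
        have e2 : u.2 - 1 = y0 := congrArg Prod.snd e
        have : u = ((x0-1, y0+1) : ℤ×ℤ) := by rw [Prod.ext_iff]; omega
        rw [← this]; exact hu.1
      rcases hzt u hu.1 with ⟨l1, l2⟩ | ⟨l1, l2⟩
      · exact Or.inl ⟨⟨l1, by simpa using h1⟩, ⟨l2, by simpa using h2⟩⟩
      · exact Or.inr ⟨fun h => l1 h.1, fun h => l2 h.1⟩
    have hne : P'.Nonempty := ⟨p, hp.1, by simpa using hpr⟩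
    have hconn' : (triGrid.induce P').Connected := by
      apply connected_del triGrid P r hconn hne
      intro a b ha hb hadja hadjb
      -- classify neighbours of r : only E, S, SE possible
      have classify : ∀ c : ℤ×ℤ, c ∈ P' → triGrid.Adj r c →
          c = ((x0+1,y0) : ℤ×ℤ) ∨ c = ((x0,y0-1) : ℤ×ℤ) ∨ c = ((x0+1,y0-1) : ℤ×ℤ) := by
        intro c hc hadj
        rcases adj_cases hadj with rfl|rfl|rfl|rfl|rfl|rfl
        · exact Or.inl rfl
        · exact absurd hc.1 hW
        · exact absurd hc.1 hN
        · exact Or.inr (Or.inl rfl)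
        · exact Or.inr (Or.inr rfl)
        · exact absurd hc.1 hNW
      by_cases hS : ((x0,y0-1) : ℤ×ℤ) ∈ P
      · -- both lower neighbours of r occupied
        have hSE : ((x0+1,y0-1) : ℤ×ℤ) ∈ P := by
          rcases hzt r hrP with ⟨l1, l2⟩ | ⟨l1, l2⟩
          · exact l2
          · exact absurd hS l1
        have hS' : ((x0,y0-1) : ℤ×ℤ) ∈ P' := ⟨hS, by simp [hr, Prod.ext_iff]⟩
        have hSE' : ((x0+1,y0-1) : ℤ×ℤ) ∈ P' := ⟨hSE, by simp [hr, Prod.ext_iff]⟩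
        have hadjES : triGrid.Adj ((x0+1,y0) : ℤ×ℤ) ((x0+1,y0-1) : ℤ×ℤ) :=
          adj_of_mem (by simp only [dirs, Finset.mem_insert, Finset.mem_singleton,
            Prod.ext_iff]; omega)
        have hadjSS : triGrid.Adj ((x0,y0-1) : ℤ×ℤ) ((x0+1,y0-1) : ℤ×ℤ) :=
          adj_of_mem (by simp only [dirs, Finset.mem_insert, Finset.mem_singleton,
            Prod.ext_iff]; omega)
        have reachSE : ∀ c (hc : c ∈ P'), triGrid.Adj r c →
            (triGrid.induce P').Reachable ⟨c, hc⟩ ⟨((x0+1,y0-1) : ℤ×ℤ), hSE'⟩ := by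
          intro c hc hadj
          rcases classify c hc hadj with rfl|rfl|rfl
          · exact (show (triGrid.induce P').Adj ⟨_, hc⟩ ⟨_, hSE'⟩ from by simpa using hadjES).reachable
          · exact (show (triGrid.induce P').Adj ⟨_, hc⟩ ⟨_, hSE'⟩ from by simpa using hadjSS).reachable
          · exact SimpleGraph.Reachable.refl _
        exact (reachSE a ha hadja).trans (reachSE b hb hadjb).symm
      · -- no lower neighbours: only E possible
        have hSE : ((x0+1,y0-1) : ℤ×ℤ) ∉ P := by
          rcases hzt r hrP with ⟨l1, l2⟩ | ⟨l1, l2⟩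
          · exact absurd l1 hS
          · exact l2
        have ea : a = ((x0+1,y0) : ℤ×ℤ) := by
          rcases classify a ha hadja with h|h|h
          · exact h
          · exact absurd (h ▸ ha.1) hS
          · exact absurd (h ▸ ha.1) hSE
        have eb : b = ((x0+1,y0) : ℤ×ℤ) := by
          rcases classify b hb hadjb with h|h|h
          · exact h
          · exact absurd (h ▸ hb.1) hS
          · exact absurd (h ▸ hb.1) hSE
        subst ea
        subst eb
        exact SimpleGraph.Reachable.refl _
    have hp' : IsLeader P' p :=
      ⟨⟨hp.1, by simpa using hpr⟩, fun h => hp.2.1 h.1, fun h => hp.2.2.1 h.1,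
        fun h => hp.2.2.2.1 h.1, fun h => hp.2.2.2.2 h.1⟩
    have hq' : IsLeader P' q :=
      ⟨⟨hq.1, by simpa using hqr⟩, fun h => hq.2.1 h.1, fun h => hq.2.2.1 h.1,
        fun h => hq.2.2.2.1 h.1, fun h => hq.2.2.2.2 h.1⟩
    exact ih P' hfin' hcard' hzt' hconn' p q hp' hq'


/-- In a final configuration no two distinct particles can both be leaders. -/
theorem at_most_one_leader (P : Set (ℤ × ℤ)) (hfin : P.Finite)
    (hzt : ZeroOrTwoLower P) (hconn : (triGrid.induce P).Connected)
    (p q : ℤ × ℤ) (hp : IsLeader P p) (hq : IsLeader P q) :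
    p = q :=
  key hfin.toFinset.card P hfin le_rfl hzt hconn p q hp hq
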